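/- Let V be a d-dimensional ℂ-vector space, f : V → V a nilpotent endomorphism of Jordan type μ (a partition of d), and λ a partition of d. If there exists a filtration 0 = V₀ ⊆ V₁ ⊆ ⋯ ⊆ V_{ℓ(λ')} = V with f(V_i) ⊆ V_{i−1} and dim V_i/V_{i−1} = λ'_i for all i (where λ' is the conjugate partition), then μ ⪯ λ in the dominance order. Moreover if μ = λ then such a filtration is unique. -/
import Mathlib


/-- Let `V` be a `d`-dimensional `ℂ`-vector space and
`f : V → V` a nilpotent endomorphism of Jordan type `μ ⊢ d` (recorded through
its conjugate partition `mu'` via `dim Ker fⁱ = mu'₁ + ⋯ + mu'ᵢ`), and let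
`λ ⊢ d` be a partition with conjugate `lam'`.  If there is a filtration
`0 = W₀ ⊆ W₁ ⊆ ⋯ ⊆ W_ℓ = V` with `f(Wᵢ₊₁) ⊆ Wᵢ` and
`dim Wᵢ₊₁/Wᵢ = lam'ᵢ`, then `λ' ⪯ μ'` in dominance order (equivalently
`μ ⪯ λ`).  Moreover, if `μ = λ` then such a filtration is unique. -/
theorem flag_dominance_and_uniqueness
    (d : ℕ) (V : Type) [AddCommGroup V] [Module ℂ V] [FiniteDimensional ℂ V]
    (hd : Module.finrank ℂ V = d)
    (f : Module.End ℂ V) (hf : IsNilpotent f)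
    (mu' lam' : ℕ → ℕ) (hmu'A : Antitone mu') (hlam'A : Antitone lam')
    (hmu : ∀ i : ℕ,
      Module.finrank ℂ (LinearMap.ker (f ^ i)) = ∑ j ∈ Finset.range i, mu' j)
    (ℓ : ℕ) (hlamsum : ∑ j ∈ Finset.range ℓ, lam' j = d)
    (W : ℕ → Submodule ℂ V)
    (hW0 : W 0 = ⊥) (hWtop : W ℓ = ⊤) (hWmono : Monotone W)
    (hWf : ∀ i, Submodule.map f (W (i + 1)) ≤ W i)
    (hWdim : ∀ i, Module.finrank ℂ (W (i + 1)) = Module.finrank ℂ (W i) + lam' i) :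
    (∀ i, ∑ j ∈ Finset.range i, lam' j ≤ ∑ j ∈ Finset.range i, mu' j) ∧
      ((∀ j, mu' j = lam' j) →
        ∀ W₂ : ℕ → Submodule ℂ V,
          W₂ 0 = ⊥ → W₂ ℓ = ⊤ → Monotone W₂ →
          (∀ i, Submodule.map f (W₂ (i + 1)) ≤ W₂ i) →
          (∀ i, Module.finrank ℂ (W₂ (i + 1)) = Module.finrank ℂ (W₂ i) + lam' i) →
          ∀ i, W₂ i = W i) := by

  have key : ∀ (U : ℕ → Submodule ℂ V), U 0 = ⊥ →
      (∀ i, Submodule.map f (U (i + 1)) ≤ U i) →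
      ∀ i, U i ≤ LinearMap.ker (f ^ i) := by
    intro U hU0 hUf i
    induction i with
    | zero => simp [hU0]
    | succ i ih =>
      intro x hx
      have hfx : f x ∈ U i := hUf i ⟨x, hx, rfl⟩
      have h2 := ih hfx
      simp only [LinearMap.mem_ker] at h2 ⊢
      rw [pow_succ, Module.End.mul_apply]
      exact h2
  have dims : ∀ (U : ℕ → Submodule ℂ V), U 0 = ⊥ →
      (∀ i, Module.finrank ℂ (U (i + 1)) = Module.finrank ℂ (U i) + lam' i) →
      ∀ i, Module.finrank ℂ (U i) = ∑ j ∈ Finset.range i, lam' j := by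
    intro U hU0 hUd i
    induction i with
    | zero => simp [hU0]
    | succ i ih => rw [hUd i, ih, Finset.sum_range_succ]
  constructor
  · intro i
    calc ∑ j ∈ Finset.range i, lam' j = Module.finrank ℂ (W i) :=
          (dims W hW0 hWdim i).symm
      _ ≤ Module.finrank ℂ (LinearMap.ker (f ^ i)) :=
          Submodule.finrank_mono (key W hW0 hWf i)
      _ = ∑ j ∈ Finset.range i, mu' j := hmu i
  · intro heq W₂ hW₂0 _ _ hW₂f hW₂dim i
    have hker : ∀ (U : ℕ → Submodule ℂ V), U 0 = ⊥ →
        (∀ i, Submodule.map f (U (i + 1)) ≤ U i) →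
        (∀ i, Module.finrank ℂ (U (i + 1)) = Module.finrank ℂ (U i) + lam' i) →
        ∀ i, U i = LinearMap.ker (f ^ i) := by
      intro U hU0 hUf hUd i
      refine Submodule.eq_of_le_of_finrank_le (key U hU0 hUf i) ?_
      rw [hmu i, dims U hU0 hUd i]
      exact Finset.sum_le_sum fun j _ => le_of_eq (heq j)
    rw [hker W₂ hW₂0 hW₂f hW₂dim i, hker W hW0 hWf hWdim i]
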